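/- Suppose k is a local field and let A be a non-Archimedean Banach k-algebra. Then every injective k-algebra homomorphism φ : C_bd(X,k) → A whose image is closed in A is continuous. -/

import Mathlib

/-- `k` is a finite field equipped with the trivial absolute value. -/
def IsTriviallyValuedFiniteField (k : Type*) [NormedField k] : Prop :=
  Finite k ∧ ∀ a : k, a ≠ 0 → ‖a‖ = 1

/-- `k` is a nonarchimedean local field: together with an ambient completeness assumption,
this says that `k` is a complete discretely valued field (the value group of `k` is generated
by the norm of a uniformizer `π`) whose residue field is finite (the unit ball is covered by
finitely many open unit balls). -/
def IsNALocalField (k : Type*) [NormedField k] : Prop :=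
  (∃ π : k, 0 < ‖π‖ ∧ ‖π‖ < 1 ∧ ∀ a : k, a ≠ 0 → ∃ n : ℤ, ‖a‖ = ‖π‖ ^ n) ∧
  (∃ S : Finset k, ∀ a : k, ‖a‖ ≤ 1 → ∃ s ∈ S, ‖a - s‖ < 1)

/-- In `C_bd(X,k)` with discretely valued `k`, the sup norm is attained. -/
lemma norm_attained {X : Type*} [TopologicalSpace X] {k : Type*} [NormedField k]
    {π : k} (hπ0 : 0 < ‖π‖) (hπ1 : ‖π‖ < 1)
    (hdisc : ∀ a : k, a ≠ 0 → ∃ n : ℤ, ‖a‖ = ‖π‖ ^ n)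
    (f : BoundedContinuousFunction X k) (hf : f ≠ 0) :
    ∃ x : X, ‖f x‖ = ‖f‖ := by
  have hr : 0 < ‖f‖ := norm_pos_iff.mpr hf
  have hlt : ‖f‖ * ‖π‖ < ‖f‖ := by
    nlinarith
  obtain ⟨x0, hx0⟩ : ∃ x : X, ‖f‖ * ‖π‖ < ‖f x‖ := by
    by_contra h
    push_neg at h
    have := (BoundedContinuousFunction.norm_le (by positivity)).2 h
    linarith
  have hx0pos : 0 < ‖f x0‖ := lt_of_le_of_lt (by positivity) hx0
  refine ⟨x0, le_antisymm (f.norm_coe_le_norm x0) ?_⟩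
  refine (BoundedContinuousFunction.norm_le hx0pos.le).2 fun y => ?_
  by_contra hy
  push_neg at hy
  have hfy : f y ≠ 0 := by
    intro h0; rw [h0] at hy; simp at hy; linarith
  have hfx0 : f x0 ≠ 0 := by
    intro h0; rw [h0] at hx0pos; simp at hx0pos
  obtain ⟨m, hm⟩ := hdisc (f y) hfy
  obtain ⟨n, hn⟩ := hdisc (f x0) hfx0
  have hmn : m < n := by
    have := hy
    rw [hm, hn] at this
    exact ((zpow_right_strictAnti₀ hπ0 hπ1).lt_iff_gt).1 this
  have h1 : ‖π‖ ^ n ≤ ‖π‖ ^ (m + 1) :=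
    zpow_le_zpow_right_of_le_one₀ hπ0 hπ1.le (by omega)
  have h2 : ‖π‖ ^ (m + 1) = ‖f y‖ * ‖π‖ := by
    rw [hm, zpow_add_one₀ (ne_of_gt hπ0)]
  have h3 : ‖f y‖ * ‖π‖ ≤ ‖f‖ * ‖π‖ :=
    mul_le_mul_of_nonneg_right (f.norm_coe_le_norm y) hπ0.le
  rw [hn] at hx0
  linarith

/-- The key inequality: `‖f‖ ≤ ‖φ f‖`. -/
lemma key_ineq {X : Type*} [TopologicalSpace X]
    (k : Type*) [NormedField k] [CompleteSpace k]
    {π : k} (hπ0 : 0 < ‖π‖) (hπ1 : ‖π‖ < 1)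
    (hdisc : ∀ a : k, a ≠ 0 → ∃ n : ℤ, ‖a‖ = ‖π‖ ^ n)
    (A : Type*) [NormedRing A] [NormedAlgebra k A] [CompleteSpace A] [NormOneClass A]
    (φ : BoundedContinuousFunction X k →ₐ[k] A) (hinj : Function.Injective φ)
    (hcl : IsClosed (Set.range (⇑φ))) (f : BoundedContinuousFunction X k) :
    ‖f‖ ≤ ‖φ f‖ := by
  rcases eq_or_ne f 0 with rfl | hf
  · simp
  obtain ⟨x0, hx0⟩ := norm_attained hπ0 hπ1 hdisc f hf
  have hlam0ne : f x0 ≠ 0 := by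
    intro h0
    rw [h0, norm_zero] at hx0
    exact hf (norm_eq_zero.mp hx0.symm)
  by_contra hlt
  push_neg at hlt
  rw [← hx0] at hlt
  -- hlt : ‖φ f‖ < ‖lam0‖
  set g : BoundedContinuousFunction X k := (f x0)⁻¹ • f with hg
  set t : A := φ g with ht
  have htn : ‖t‖ < 1 := by
    have : ‖t‖ = ‖f x0‖⁻¹ * ‖φ f‖ := by
      rw [ht, hg, map_smul, norm_smul, norm_inv]
    rw [this]
    rw [inv_mul_lt_iff₀ (norm_pos_iff.mpr hlam0ne), mul_one]
    exact hlt
  -- geometric series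
  have hsum : Summable fun n : ℕ => t ^ n := summable_geometric_of_norm_lt_one htn
  set s : A := ∑' n : ℕ, t ^ n with hs
  have hmem : s ∈ Set.range (⇑φ) := by
    refine hcl.mem_of_tendsto hsum.hasSum.tendsto_sum_nat
      (Filter.Eventually.of_forall fun n => ⟨∑ i ∈ Finset.range n, g ^ i, ?_⟩)
    rw [map_sum]
    exact Finset.sum_congr rfl fun i _ => by rw [map_pow]
  obtain ⟨h, hh⟩ := hmem
  have hinvert : (1 - t) * s = 1 := by
    have := (Units.oneSub t htn).val_inv
    exact this
  have : φ ((1 - g) * h) = φ 1 := by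
    rw [map_mul, map_sub, map_one, hh, hinvert]
  have heq : (1 - g) * h = 1 := hinj this
  have := congrArg (fun u : BoundedContinuousFunction X k => u x0) heq
  simp only [BoundedContinuousFunction.coe_mul, BoundedContinuousFunction.coe_sub,
    BoundedContinuousFunction.coe_one, Pi.mul_apply, Pi.sub_apply, Pi.one_apply] at this
  rw [hg] at this
  simp only [BoundedContinuousFunction.coe_smul, Pi.smul_apply, smul_eq_mul] at this
  rw [inv_mul_cancel₀ hlam0ne, sub_self, zero_mul] at this
  exact zero_ne_one this


/-- (Weak automatic continuity.) If `k` is a local field and `A` is a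
non-Archimedean Banach `k`-algebra, then every injective `k`-algebra homomorphism
`φ : C_bd(X,k) → A` whose image is closed in `A` is continuous. -/
theorem automatic_continuity {X : Type*} [TopologicalSpace X]
    (k : Type*) [NormedField k] [CompleteSpace k] [IsUltrametricDist k]
    (hk : IsNALocalField k)
    (A : Type*) [NormedRing A] [NormedAlgebra k A] [CompleteSpace A]
    [IsUltrametricDist A] [NormOneClass A]
    (φ : BoundedContinuousFunction X k →ₐ[k] A) (hinj : Function.Injective φ)
    (hcl : IsClosed (Set.range (⇑φ))) : Continuous (⇑φ) := by
  obtain ⟨⟨π, hπ0, hπ1, hdisc⟩, -⟩ := hk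
  have key : ∀ f, ‖f‖ ≤ ‖φ f‖ := key_ineq k hπ0 hπ1 hdisc A φ hinj hcl
  letI : NontriviallyNormedField k :=
    { ‹NormedField k› with
      non_trivial := ⟨π⁻¹, by
        rw [norm_inv]
        exact (one_lt_inv₀ hπ0).mpr hπ1⟩ }
  set p := LinearMap.range φ.toLinearMap with hp
  have hpc : IsClosed (p : Set A) := by
    have : (p : Set A) = Set.range (⇑φ) := by
      ext a
      simp [hp, LinearMap.mem_range, Set.mem_range]
    rw [this]
    exact hcl
  haveI : CompleteSpace p := hpc.completeSpace_coe
  have hinj' : Function.Injective φ.toLinearMap := hinj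
  set e := LinearEquiv.ofInjective φ.toLinearMap hinj' with he
  have hψ : Continuous ⇑e.symm := by
    refine AddMonoidHomClass.continuous_of_bound e.symm.toLinearMap 1 fun b => ?_
    have h1 : φ (e.symm b) = (b : A) := by
      have := e.apply_symm_apply b
      have h2 : ((e (e.symm b) : p) : A) = (b : A) := by rw [this]
      rw [← h2]
      rfl
    have := key (e.symm b)
    rw [h1] at this
    simpa using this
  set e' := LinearEquiv.toContinuousLinearEquivOfContinuous e.symm hψ with he'
  have hcont : Continuous ⇑e'.symm := e'.symm.continuous
  have : ⇑φ = (Subtype.val : p → A) ∘ ⇑e'.symm := by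
    funext f
    have : (e'.symm f : A) = ((e f : p) : A) := rfl
    simp only [Function.comp_apply, this]
    rfl
  rw [this]
  exact continuous_subtype_val.comp hcont
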